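/- Let H_7 be the graph on vertices {1,…,7} with edges {12, 13, 14, 23, 25, 36, 47, 57, 67}. Let A be a 7×7 real symmetric matrix with a_{ij} > 0 for ij ∈ E(H_7) and a_{ij} = 0 otherwise. Then det A = -2·a_{14}·a_{25}·a_{36}·(a_{12}·a_{36}·a_{47}·a_{57} + a_{13}·a_{25}·a_{47}·a_{67} + a_{14}·a_{23}·a_{57}·a_{67}) < 0; in particular A is nonsingular. -/

import Mathlib

set_option maxHeartbeats 1000000 in
set_option maxRecDepth 8000 in
lemma m01 (a b c d e f g h i : ℝ) :
    (!![a,d,0,e,0,0; b,0,0,0,f,0; c,0,0,0,0,g; 0,0,0,0,0,h; 0,f,0,0,0,i; 0,0,g,h,i,0] :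
      Matrix (Fin 6) (Fin 6) ℝ).det = c*e*f^2*g*h := by
  simp [Matrix.det_succ_row_zero, Fin.sum_univ_succ, Fin.succAbove, Fin.ext_iff,
    Fin.castSucc, Fin.castAdd, Fin.castLE]
  ring

set_option maxHeartbeats 1000000 in
set_option maxRecDepth 8000 in
lemma m02 (a b c d e f g h i : ℝ) :
    (!![a,0,0,e,0,0; b,d,0,0,f,0; c,0,0,0,0,g; 0,e,0,0,0,h; 0,0,0,0,0,i; 0,0,g,h,i,0] :
      Matrix (Fin 6) (Fin 6) ℝ).det = -(c*e^2*f*g*i) := by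
  simp [Matrix.det_succ_row_zero, Fin.sum_univ_succ, Fin.succAbove, Fin.ext_iff,
    Fin.castSucc, Fin.castAdd, Fin.castLE]
  ring

set_option maxHeartbeats 1000000 in
set_option maxRecDepth 8000 in
lemma m03 (a b c d e f g h i : ℝ) :
    (!![a,0,d,e,0,0; b,d,0,0,f,0; c,0,0,0,0,g; 0,e,0,0,0,h; 0,0,f,0,0,i; 0,0,0,h,i,0] :
      Matrix (Fin 6) (Fin 6) ℝ).det = a*e*f^2*g*h + 2*c*d*e*f*h*i + b*e^2*f*g*i := by
  simp [Matrix.det_succ_row_zero, Fin.sum_univ_succ, Fin.succAbove, Fin.ext_iff,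
    Fin.castSucc, Fin.castAdd, Fin.castLE]
  ring

set_option maxHeartbeats 1000000 in
set_option maxRecDepth 8000 in
lemma m7 (a b c d e f g h i : ℝ) :
    (!![0,a,b,c,0,0,0; a,0,d,0,e,0,0; b,d,0,0,0,f,0; c,0,0,0,0,0,g;
       0,e,0,0,0,0,h; 0,0,f,0,0,0,i; 0,0,0,g,h,i,0] : Matrix (Fin 7) (Fin 7) ℝ).det
    = -2*c*e*f*(a*f*g*h + b*e*g*i + c*d*h*i) := by
  set M : Matrix (Fin 7) (Fin 7) ℝ :=
    !![0,a,b,c,0,0,0; a,0,d,0,e,0,0; b,d,0,0,0,f,0; c,0,0,0,0,0,g;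
       0,e,0,0,0,0,h; 0,0,f,0,0,0,i; 0,0,0,g,h,i,0] with hM
  have h1 : M.submatrix Fin.succ ((1 : Fin 7).succAbove) =
      !![a,d,0,e,0,0; b,0,0,0,f,0; c,0,0,0,0,g; 0,0,0,0,0,h; 0,f,0,0,0,i; 0,0,g,h,i,0] := by
    ext i j; fin_cases i <;> fin_cases j <;> rfl
  have h2 : M.submatrix Fin.succ ((2 : Fin 7).succAbove) =
      !![a,0,0,e,0,0; b,d,0,0,f,0; c,0,0,0,0,g; 0,e,0,0,0,h; 0,0,0,0,0,i; 0,0,g,h,i,0] := by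
    ext i j; fin_cases i <;> fin_cases j <;> rfl
  have h3 : M.submatrix Fin.succ ((3 : Fin 7).succAbove) =
      !![a,0,d,e,0,0; b,d,0,0,f,0; c,0,0,0,0,g; 0,e,0,0,0,h; 0,0,f,0,0,i; 0,0,0,h,i,0] := by
    ext i j; fin_cases i <;> fin_cases j <;> rfl
  rw [Matrix.det_succ_row_zero, Fin.sum_univ_seven]
  simp only [h1, h2, h3, m01, m02, m03,
    show M 0 0 = (0:ℝ) from rfl, show M 0 1 = a from rfl, show M 0 2 = b from rfl,
    show M 0 3 = c from rfl, show M 0 4 = (0:ℝ) from rfl, show M 0 5 = (0:ℝ) from rfl,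
    show M 0 6 = (0:ℝ) from rfl,
    show ((1:Fin 7):ℕ) = 1 from rfl, show ((2:Fin 7):ℕ) = 2 from rfl,
    show ((3:Fin 7):ℕ) = 3 from rfl, show ((4:Fin 7):ℕ) = 4 from rfl,
    show ((5:Fin 7):ℕ) = 5 from rfl, show ((6:Fin 7):ℕ) = 6 from rfl,
    zero_mul, mul_zero, neg_zero, zero_add, add_zero]
  norm_num
  ring

/-- The edge relation of the graph `H₇` on vertices `{1,…,7}` (represented by `Fin 7`
with vertex `k` corresponding to index `k - 1`), with edges
`{12, 13, 14, 23, 25, 36, 47, 57, 67}`. -/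
def H7Edge (i j : Fin 7) : Prop :=
  (i.val + 1, j.val + 1) ∈ [(1,2),(1,3),(1,4),(2,3),(2,5),(3,6),(4,7),(5,7),(6,7)] ∨
  (j.val + 1, i.val + 1) ∈ [(1,2),(1,3),(1,4),(2,3),(2,5),(3,6),(4,7),(5,7),(6,7)]

instance : ∀ i j : Fin 7, Decidable (H7Edge i j) := fun i j => by
  unfold H7Edge; infer_instance

/-- For a `7 × 7` real symmetric matrix whose support is exactly the edge set of `H₇`
(positive entries on edges, zero elsewhere),
`det A = -2·a₁₄·a₂₅·a₃₆·(a₁₂·a₃₆·a₄₇·a₅₇ + a₁₃·a₂₅·a₄₇·a₆₇ + a₁₄·a₂₃·a₅₇·a₆₇) < 0`;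
in particular `A` is nonsingular. -/
theorem H7_pattern_det (A : Matrix (Fin 7) (Fin 7) ℝ) (hsymm : A.IsSymm)
    (hpos : ∀ i j : Fin 7, H7Edge i j → 0 < A i j)
    (hzero : ∀ i j : Fin 7, ¬ H7Edge i j → A i j = 0) :
    A.det = -2 * A 0 3 * A 1 4 * A 2 5 *
      (A 0 1 * A 2 5 * A 3 6 * A 4 6 + A 0 2 * A 1 4 * A 3 6 * A 5 6 +
        A 0 3 * A 1 2 * A 4 6 * A 5 6) ∧
    A.det < 0 ∧ A.det ≠ 0 := by
  have hA : A = !![0, A 0 1, A 0 2, A 0 3, 0, 0, 0;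
      A 0 1, 0, A 1 2, 0, A 1 4, 0, 0;
      A 0 2, A 1 2, 0, 0, 0, A 2 5, 0;
      A 0 3, 0, 0, 0, 0, 0, A 3 6;
      0, A 1 4, 0, 0, 0, 0, A 4 6;
      0, 0, A 2 5, 0, 0, 0, A 5 6;
      0, 0, 0, A 3 6, A 4 6, A 5 6, 0] := by
    ext i j
    fin_cases i <;> fin_cases j <;>
      first
        | rfl
        | exact hzero _ _ (by decide)
        | exact hsymm.apply _ _
  have hdet : A.det = -2 * A 0 3 * A 1 4 * A 2 5 *
      (A 0 1 * A 2 5 * A 3 6 * A 4 6 + A 0 2 * A 1 4 * A 3 6 * A 5 6 +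
        A 0 3 * A 1 2 * A 4 6 * A 5 6) := by
    conv_lhs => rw [hA]
    rw [m7]
  have p01 := hpos 0 1 (by decide)
  have p02 := hpos 0 2 (by decide)
  have p03 := hpos 0 3 (by decide)
  have p12 := hpos 1 2 (by decide)
  have p14 := hpos 1 4 (by decide)
  have p25 := hpos 2 5 (by decide)
  have p36 := hpos 3 6 (by decide)
  have p46 := hpos 4 6 (by decide)
  have p56 := hpos 5 6 (by decide)
  have hS : 0 < A 0 1 * A 2 5 * A 3 6 * A 4 6 + A 0 2 * A 1 4 * A 3 6 * A 5 6 +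
      A 0 3 * A 1 2 * A 4 6 * A 5 6 :=
    add_pos (add_pos (mul_pos (mul_pos (mul_pos p01 p25) p36) p46)
      (mul_pos (mul_pos (mul_pos p02 p14) p36) p56))
      (mul_pos (mul_pos (mul_pos p03 p12) p46) p56)
  have hneg : A.det < 0 := by
    rw [hdet]
    have := mul_pos (mul_pos (mul_pos p03 p14) p25) hS
    nlinarith
  exact ⟨hdet, hneg, ne_of_lt hneg⟩
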